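/- arXiv:1905.11783 — 5 statements merged into one kernel-verified Lean document; each statement's English description precedes it below -/
import Mathlib

section
/- Let A be a real skew-symmetric d × d matrix (Aᵀ = −A). Then there exist an orthogonal d × d matrix Q and real numbers λ₀, …, λ_{m−1}, where m = ⌊d/2⌋, such that Qᵀ A Q is the block-diagonal matrix B whose only nonzero entries are B(2i, 2i+1) = λᵢ and B(2i+1, 2i) = −λᵢ for i = 0, …, m−1 (all other entries of B are zero; in particular, when d is odd, the last row and column of B are zero). -/
open Matrix
open scoped RealInnerProductSpace

noncomputable section SkewBlock

private def Bfun (d : ℕ) (lam : Fin (d / 2) → ℝ) : Matrix (Fin d) (Fin d) ℝ :=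
  Matrix.of (fun i j : Fin d =>
    if h : (i : ℕ) % 2 = 0 ∧ (j : ℕ) = (i : ℕ) + 1 then
      lam ⟨(i : ℕ) / 2, by have hi := i.isLt; have hj := j.isLt; revert h; omega⟩
    else if h' : (j : ℕ) % 2 = 0 ∧ (i : ℕ) = (j : ℕ) + 1 then
      -lam ⟨(j : ℕ) / 2, by have hi := i.isLt; have hj := j.isLt; revert h'; omega⟩
    else 0)

private lemma Bfun_zero (d : ℕ) : Bfun d (fun _ => 0) = 0 := by
  ext i j
  simp only [Bfun, Matrix.of_apply, Matrix.zero_apply]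
  split_ifs <;> simp

private lemma dot_eq_inner {d : ℕ} (x y : EuclideanSpace ℝ (Fin d)) :
    dotProduct (x : Fin d → ℝ) (y : Fin d → ℝ) = ⟪x, y⟫ := by
  simp [dotProduct, PiLp.inner_apply, RCLike.inner_apply, mul_comm]

set_option maxHeartbeats 2000000 in
private lemma skew_aux : ∀ d : ℕ, ∀ A : Matrix (Fin d) (Fin d) ℝ, Aᵀ = -A →
    ∃ (Q : Matrix (Fin d) (Fin d) ℝ) (lam : Fin (d / 2) → ℝ),
      Qᵀ * Q = 1 ∧ Qᵀ * A * Q = Bfun d lam := by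
  intro d
  induction d using Nat.strong_induction_on with
  | _ d ih =>
    intro A hA
    by_cases hA0 : A = 0
    · refine ⟨1, fun _ => 0, by simp, ?_⟩
      rw [hA0, Bfun_zero]
      simp
    · have hd2 : 2 ≤ d := by
        by_contra h
        push_neg at h
        apply hA0
        interval_cases d
        · ext i j; exact i.elim0
        · ext i j
          fin_cases i; fin_cases j
          have := congrFun (congrFun hA 0) 0
          simp only [transpose_apply, Matrix.neg_apply] at this
          simpa using by linarith
      obtain ⟨n, rfl⟩ : ∃ n, d = n + 2 := ⟨d - 2, by omega⟩
      -- Step 1: an eigenvector of S = Aᵀ A with nonzero eigenvalue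
      have hCT : ∀ B : Matrix (Fin (n+2)) (Fin (n+2)) ℝ, Bᴴ = Bᵀ := by
        intro B; ext i j; simp [conjTranspose_apply]
      set S := Aᵀ * A with hSdef
      have hS : S.IsHermitian := by
        have := Matrix.isHermitian_conjTranspose_mul_self A
        rwa [hCT] at this
      have hex : ∃ i, hS.eigenvalues i ≠ 0 := by
        by_contra hall
        push_neg at hall
        have hS0 : S = 0 := by
          have := hS.spectral_theorem
          rw [this]
          have : (RCLike.ofReal ∘ hS.eigenvalues : Fin (n+2) → ℝ) = fun _ => 0 := by
            funext i; simp [hall i]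
          rw [this]
          simp
        apply hA0
        ext k j
        have hdiag := congrFun (congrFun hS0 j) j
        simp only [hSdef, Matrix.mul_apply, transpose_apply, Matrix.zero_apply] at hdiag
        have hterm : ∀ k ∈ Finset.univ, (0:ℝ) ≤ A k j * A k j := fun k _ => mul_self_nonneg _
        have := (Finset.sum_eq_zero_iff_of_nonneg hterm).mp hdiag k (Finset.mem_univ k)
        simpa using mul_self_eq_zero.mp this
      obtain ⟨i₀, hi₀⟩ := hex
      set μ := hS.eigenvalues i₀ with hμdef
      set u : EuclideanSpace ℝ (Fin (n+2)) := hS.eigenvectorBasis i₀ with hudef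
      have hSu : S *ᵥ (u : Fin (n+2) → ℝ) = μ • (u : Fin (n+2) → ℝ) :=
        hS.mulVec_eigenvectorBasis i₀
      have huu : dotProduct (u : Fin (n+2) → ℝ) u = 1 := by
        rw [dotProduct]
        have h1 : ‖u‖ = 1 := hS.eigenvectorBasis.orthonormal.1 i₀
        have := real_inner_self_eq_norm_mul_norm u
        simp only [PiLp.inner_apply, RCLike.inner_apply, starRingEnd_apply, star_trivial] at this
        rw [this, h1]; norm_num
      have hAuAu : dotProduct (A *ᵥ u) (A *ᵥ u) = μ := by
        have h1 : dotProduct (u : Fin (n+2) → ℝ) (S *ᵥ u) = dotProduct (A *ᵥ u) (A *ᵥ u) := by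
          rw [hSdef, ← Matrix.mulVec_mulVec, Matrix.dotProduct_mulVec, Matrix.vecMul_transpose]
        rw [← h1, hSu, dotProduct_smul, smul_eq_mul, huu, mul_one]
      have hμpos : 0 < μ := by
        have hge : 0 ≤ μ := by
          rw [← hAuAu, dotProduct]
          exact Finset.sum_nonneg fun k _ => mul_self_nonneg _
        exact lt_of_le_of_ne hge (Ne.symm hi₀)
      set lam0 := Real.sqrt μ with hlam0def
      have hlampos : 0 < lam0 := Real.sqrt_pos.mpr hμpos
      have hlamsq : lam0 * lam0 = μ := Real.mul_self_sqrt hμpos.le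
      set w : EuclideanSpace ℝ (Fin (n+2)) := WithLp.toLp 2 ((-(lam0⁻¹)) • (A *ᵥ u : Fin (n+2) → ℝ)) with hwdef
      have hAu : A *ᵥ (u : Fin (n+2) → ℝ) = (-lam0) • (w : Fin (n+2) → ℝ) := by
        rw [hwdef, WithLp.ofLp_toLp, smul_smul]
        field_simp
        rw [one_smul]
      have hAAu : A *ᵥ (A *ᵥ (u : Fin (n+2) → ℝ)) = (-μ) • (u : Fin (n+2) → ℝ) := by
        have hAA : A * A = -S := by
          rw [hSdef, hA]; simp
        rw [Matrix.mulVec_mulVec, hAA, Matrix.neg_mulVec, hSu]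
        simp
      have hAw : A *ᵥ (w : Fin (n+2) → ℝ) = lam0 • (u : Fin (n+2) → ℝ) := by
        rw [hwdef, WithLp.ofLp_toLp, Matrix.mulVec_smul, hAAu, smul_smul]
        congr 1
        field_simp
        rw [sq]
        exact hlamsq.symm
      have huAu : dotProduct (u : Fin (n+2) → ℝ) (A *ᵥ u) = 0 := by
        have h1 : dotProduct (u : Fin (n+2) → ℝ) (A *ᵥ u)
            = dotProduct (Aᵀ *ᵥ u) (u : Fin (n+2) → ℝ) := by
          rw [Matrix.dotProduct_mulVec u, ← Matrix.mulVec_transpose, dotProduct_comm]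
        rw [hA] at h1
        rw [Matrix.neg_mulVec, neg_dotProduct, dotProduct_comm] at h1
        rw [dotProduct_comm]
        linarith
      have huw : dotProduct (u : Fin (n+2) → ℝ) w = 0 := by
        rw [hwdef]
        show dotProduct (u : Fin (n+2) → ℝ) ((-(lam0⁻¹)) • (A *ᵥ u)) = 0
        rw [dotProduct_smul, huAu, smul_zero]
      have hww : dotProduct (w : Fin (n+2) → ℝ) w = 1 := by
        show dotProduct ((-(lam0⁻¹)) • (A *ᵥ u) : Fin (n+2) → ℝ) _ = 1
        rw [smul_dotProduct, dotProduct_smul, hAuAu, smul_eq_mul, smul_eq_mul]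
        field_simp
        rw [sq]
        exact hlamsq.symm
      -- Step 2: extend {u, w} to an orthonormal basis
      have hnu : ‖u‖ = 1 := by
        have := real_inner_self_eq_norm_mul_norm u
        rw [← dot_eq_inner, huu] at this
        nlinarith [norm_nonneg u]
      have hnw : ‖w‖ = 1 := by
        have := real_inner_self_eq_norm_mul_norm w
        rw [← dot_eq_inner, hww] at this
        nlinarith [norm_nonneg w]
      set v : Fin (n+2) → EuclideanSpace ℝ (Fin (n+2)) := fun i => if i = 0 then u else w
        with hvdef
      have h01 : (1 : Fin (n+2)) ≠ 0 := by
        intro h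
        have := congrArg Fin.val h
        simp at this
      have hv : Orthonormal ℝ (Set.restrict {0, 1} v) := by
        constructor
        · rintro ⟨i, hi⟩
          rcases hi with rfl | hi
          · change ‖v 0‖ = 1
            simpa [hvdef] using hnu
          · rcases hi with rfl
            change ‖v 1‖ = 1
            simpa [hvdef, h01] using hnw
        · rintro ⟨i, hi⟩ ⟨j, hj⟩ hne
          rcases hi with rfl | hi <;> rcases hj with rfl | hj
          · simp at hne
          · rcases hj with rfl
            change ⟪v 0, v 1⟫ = 0
            rw [← dot_eq_inner]
            simpa [hvdef, h01] using huw
          · rcases hi with rfl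
            change ⟪v 1, v 0⟫ = 0
            rw [← dot_eq_inner, dotProduct_comm]
            simpa [hvdef, h01] using huw
          · rcases hi with rfl; rcases hj with rfl; simp at hne
      obtain ⟨c, hc⟩ := hv.exists_orthonormalBasis_extension_of_card_eq
        (by simp [finrank_euclideanSpace])
      have hc0 : c 0 = u := by simpa [hvdef] using hc 0 (by simp)
      have hc1 : c 1 = w := by simpa [hvdef, h01] using hc 1 (by simp)
      -- Step 3: conjugate A into block form
      have hcite : ∀ i j, dotProduct (c i : Fin (n+2) → ℝ) (c j) = if i = j then 1 else 0 := by
        intro i j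
        rw [dot_eq_inner]
        exact orthonormal_iff_ite.mp c.orthonormal i j
      set Q₁ : Matrix (Fin (n+2)) (Fin (n+2)) ℝ := Matrix.of (fun i j => c j i) with hQ₁def
      have hQ₁orth : Q₁ᵀ * Q₁ = 1 := by
        ext i j
        rw [Matrix.mul_apply, Matrix.one_apply]
        simpa [hQ₁def, dotProduct] using hcite i j
      set M := Q₁ᵀ * A * Q₁ with hMdef
      have hM : ∀ i j, M i j = dotProduct (c i : Fin (n+2) → ℝ) (A *ᵥ (c j : Fin (n+2) → ℝ)) := by
        intro i j
        rw [hMdef, Matrix.mul_apply]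
        simp only [Matrix.mul_apply, transpose_apply, hQ₁def, Matrix.of_apply, dotProduct,
          Matrix.mulVec, dotProduct, Finset.sum_mul, Finset.mul_sum]
        rw [Finset.sum_comm]
        congr 1; ext k; congr 1; ext l; ring
      have hMskew : ∀ i j, M j i = - M i j := by
        intro i j
        have hMt : Mᵀ = -M := by
          rw [hMdef, Matrix.transpose_mul, Matrix.transpose_mul, Matrix.transpose_transpose, hA]
          simp [Matrix.mul_assoc]
        have := congrFun (congrFun hMt i) j
        simpa using this
      have hMc0 : ∀ i, M i 0 = if i = 1 then -lam0 else 0 := by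
        intro i
        rw [hM, hc0, hAu]
        rw [dotProduct_smul, ← hc1, hcite]
        by_cases h : i = 1 <;> simp [h]
      have hMc1 : ∀ i, M i 1 = if i = 0 then lam0 else 0 := by
        intro i
        rw [hM, hc1, hAw]
        rw [dotProduct_smul, ← hc0, hcite]
        by_cases h : i = 0 <;> simp [h]
      -- Step 4: block decomposition of M
      set e : Fin 2 ⊕ Fin n ≃ Fin (n+2) := finSumFinEquiv.trans (finCongr (Nat.add_comm 2 n))
        with hedef
      have he1 : ∀ a : Fin 2, ((e (Sum.inl a)) : ℕ) = (a : ℕ) := by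
        intro a; simp [hedef]
      have he2 : ∀ k : Fin n, ((e (Sum.inr k)) : ℕ) = 2 + (k : ℕ) := by
        intro k; simp [hedef]; omega
      set A' : Matrix (Fin n) (Fin n) ℝ :=
        Matrix.of (fun i j => M (e (Sum.inr i)) (e (Sum.inr j))) with hA'def
      have hA'skew : A'ᵀ = -A' := by
        ext i j
        simp only [hA'def, transpose_apply, Matrix.neg_apply, Matrix.of_apply]
        exact hMskew _ _
      have hMblocks : M = (Matrix.reindex e e) (Matrix.fromBlocks !![0, lam0; -lam0, 0] 0 0 A') := by
        ext i j
        rw [Matrix.reindex_apply, Matrix.submatrix_apply]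
        have hi := (e.apply_symm_apply i).symm
        have hj := (e.apply_symm_apply j).symm
        rcases hp : e.symm i with a | k <;> rcases hq : e.symm j with b | l
        · rw [hp] at hi; rw [hq] at hj
          have hival : (i : ℕ) = (a : ℕ) := by rw [hi]; exact he1 a
          have hjval : (j : ℕ) = (b : ℕ) := by rw [hj]; exact he1 b
          fin_cases a <;> fin_cases b
          · rw [show i = 0 from Fin.ext (by simpa using hival),
                show j = 0 from Fin.ext (by simpa using hjval), hMc0 0]
            simp [Fin.ext_iff]
          · rw [show i = 0 from Fin.ext (by simpa using hival),
                show j = 1 from Fin.ext (by simpa using hjval), hMc1 0]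
            simp
          · rw [show i = 1 from Fin.ext (by simpa using hival),
                show j = 0 from Fin.ext (by simpa using hjval), hMc0 1]
            simp
          · rw [show i = 1 from Fin.ext (by simpa using hival),
                show j = 1 from Fin.ext (by simpa using hjval), hMc1 1]
            simp [Fin.ext_iff]
        · rw [hp] at hi; rw [hq] at hj
          have hjval : (j : ℕ) = 2 + (l : ℕ) := by rw [hj]; exact he2 _
          rw [Matrix.fromBlocks_apply₁₂]
          fin_cases a
          · have hival : (i : ℕ) = 0 := by rw [hi, he1]
            rw [show i = 0 from Fin.ext (by simpa using hival)]
            rw [show M 0 j = - M j 0 from by rw [hMskew]]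
            rw [hMc0 j]
            have : j ≠ 1 := by intro h; rw [h] at hjval; simp at hjval; omega
            simp [this]
          · have hival : (i : ℕ) = 1 := by rw [hi, he1]
            rw [show i = 1 from Fin.ext (by simpa using hival)]
            rw [show M 1 j = - M j 1 from by rw [hMskew]]
            rw [hMc1 j]
            have : j ≠ 0 := by intro h; rw [h] at hjval; simp at hjval; omega
            simp [this]
        · rw [hp] at hi; rw [hq] at hj
          have hival : (i : ℕ) = 2 + (k : ℕ) := by rw [hi]; exact he2 _
          rw [Matrix.fromBlocks_apply₂₁]
          fin_cases b
          · have hjval : (j : ℕ) = 0 := by rw [hj, he1]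
            rw [show j = 0 from Fin.ext (by simpa using hjval)]
            rw [hMc0 i]
            have : i ≠ 1 := by intro h; rw [h] at hival; simp at hival; omega
            simp [this]
          · have hjval : (j : ℕ) = 1 := by rw [hj, he1]
            rw [show j = 1 from Fin.ext (by simpa using hjval)]
            rw [hMc1 i]
            have : i ≠ 0 := by intro h; rw [h] at hival; simp at hival; omega
            simp [this]
        · rw [hp] at hi; rw [hq] at hj
          rw [Matrix.fromBlocks_apply₂₂, hA'def, hi, hj]
          rfl
      clear_value A' M Q₁ v w lam0 μ u S
      -- Step 5: induction hypothesis and assembly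
      obtain ⟨Q', lam', hQ'orth, hQ'conj⟩ := ih n (by omega) A' hA'skew
      set R : Matrix (Fin (n+2)) (Fin (n+2)) ℝ :=
        (Matrix.reindex e e) (Matrix.fromBlocks 1 0 0 Q') with hRdef
      have hmul : ∀ X Y : Matrix (Fin 2 ⊕ Fin n) (Fin 2 ⊕ Fin n) ℝ,
          ((Matrix.reindex e e) X) * ((Matrix.reindex e e) Y) = (Matrix.reindex e e) (X * Y) := by
        intro X Y
        rw [Matrix.reindex_apply, Matrix.reindex_apply, Matrix.reindex_apply,
          Matrix.submatrix_mul_equiv]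
      have hRt : Rᵀ = (Matrix.reindex e e) (Matrix.fromBlocks 1 0 0 Q'ᵀ) := by
        rw [hRdef, Matrix.reindex_apply, Matrix.reindex_apply, Matrix.transpose_submatrix,
          Matrix.fromBlocks_transpose]
        simp
      set lam : Fin ((n+2)/2) → ℝ :=
        fun i => if h : (i : ℕ) = 0 then lam0
          else lam' ⟨(i : ℕ) - 1, by have := i.isLt; omega⟩ with hlamdef
      have hlamz : ∀ (h : 0 < (n+2)/2), lam ⟨0, h⟩ = lam0 := by
        intro h; simp [hlamdef]
      have hlams : ∀ (m : ℕ) (h : m + 1 < (n+2)/2), lam ⟨m+1, h⟩ = lam' ⟨m, by omega⟩ := by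
        intro m h; simp [hlamdef]
      refine ⟨Q₁ * R, lam, ?_, ?_⟩
      · rw [Matrix.transpose_mul, Matrix.mul_assoc, ← Matrix.mul_assoc Q₁ᵀ Q₁ R, hQ₁orth,
          Matrix.one_mul, hRt, hRdef, hmul, Matrix.fromBlocks_multiply]
        simp only [Matrix.mul_zero, Matrix.zero_mul, Matrix.mul_one, Matrix.one_mul,
          add_zero, zero_add, hQ'orth]
        rw [Matrix.fromBlocks_one, Matrix.reindex_apply, Matrix.submatrix_one_equiv]
      · have key : (Q₁ * R)ᵀ * A * (Q₁ * R) = Rᵀ * M * R := by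
          rw [hMdef, Matrix.transpose_mul]
          simp only [Matrix.mul_assoc]
        rw [key, hMblocks, hRt, hRdef, hmul, hmul, Matrix.fromBlocks_multiply,
          Matrix.fromBlocks_multiply]
        simp only [Matrix.mul_zero, Matrix.zero_mul, Matrix.mul_one, Matrix.one_mul,
          add_zero, zero_add]
        rw [hQ'conj]
        ext i j
        rw [Matrix.reindex_apply, Matrix.submatrix_apply]
        have hi := (e.apply_symm_apply i).symm
        have hj := (e.apply_symm_apply j).symm
        rcases hp : e.symm i with a | k <;> rcases hq : e.symm j with b | l
        · rw [hp] at hi; rw [hq] at hj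
          have hival : (i : ℕ) = (a : ℕ) := by rw [hi]; exact he1 a
          have hjval : (j : ℕ) = (b : ℕ) := by rw [hj]; exact he1 b
          fin_cases a <;> fin_cases b <;>
            simp only [Fin.isValue, Fin.val_zero, Fin.val_one] at hival hjval
          · rw [Matrix.fromBlocks_apply₁₁]
            simp only [Bfun, Matrix.of_apply]
            rw [dif_neg (by omega), dif_neg (by omega)]
            simp
          · rw [Matrix.fromBlocks_apply₁₁]
            simp only [Bfun, Matrix.of_apply]
            rw [dif_pos (by omega : (i:ℕ) % 2 = 0 ∧ (j:ℕ) = (i:ℕ) + 1)]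
            have : (⟨(i:ℕ)/2, by have := i.isLt; have := j.isLt; omega⟩ : Fin ((n+2)/2))
                = ⟨0, by omega⟩ := by
              apply Fin.ext; simp; omega
            rw [this, hlamz]
            simp
          · rw [Matrix.fromBlocks_apply₁₁]
            simp only [Bfun, Matrix.of_apply]
            rw [dif_neg (by omega), dif_pos (by omega : (j:ℕ) % 2 = 0 ∧ (i:ℕ) = (j:ℕ) + 1)]
            have : (⟨(j:ℕ)/2, by have := i.isLt; have := j.isLt; omega⟩ : Fin ((n+2)/2))
                = ⟨0, by omega⟩ := by
              apply Fin.ext; simp; omega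
            rw [this, hlamz]
            simp
          · rw [Matrix.fromBlocks_apply₁₁]
            simp only [Bfun, Matrix.of_apply]
            rw [dif_neg (by omega), dif_neg (by omega)]
            simp
        · rw [hp] at hi; rw [hq] at hj
          have hival : (i : ℕ) = (a : ℕ) := by rw [hi]; exact he1 a
          have hjval : (j : ℕ) = 2 + (l : ℕ) := by rw [hj]; exact he2 l
          have ha2 : (a : ℕ) < 2 := a.isLt
          rw [Matrix.fromBlocks_apply₁₂]
          simp only [Bfun, Matrix.of_apply]
          rw [dif_neg (by omega), dif_neg (by omega)]
          simp
        · rw [hp] at hi; rw [hq] at hj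
          have hival : (i : ℕ) = 2 + (k : ℕ) := by rw [hi]; exact he2 k
          have hjval : (j : ℕ) = (b : ℕ) := by rw [hj]; exact he1 b
          have hb2 : (b : ℕ) < 2 := b.isLt
          rw [Matrix.fromBlocks_apply₂₁]
          simp only [Bfun, Matrix.of_apply]
          rw [dif_neg (by omega), dif_neg (by omega)]
          simp
        · rw [hp] at hi; rw [hq] at hj
          have hival : (i : ℕ) = 2 + (k : ℕ) := by rw [hi]; exact he2 k
          have hjval : (j : ℕ) = 2 + (l : ℕ) := by rw [hj]; exact he2 l
          rw [Matrix.fromBlocks_apply₂₂]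
          simp only [Bfun, Matrix.of_apply]
          by_cases h1 : (k : ℕ) % 2 = 0 ∧ (l : ℕ) = (k : ℕ) + 1
          · rw [dif_pos h1, dif_pos (by omega : (i:ℕ) % 2 = 0 ∧ (j:ℕ) = (i:ℕ) + 1)]
            have : (⟨(i:ℕ)/2, by have := i.isLt; have := j.isLt; omega⟩ : Fin ((n+2)/2))
                = ⟨(k:ℕ)/2 + 1, by have := k.isLt; omega⟩ := by
              apply Fin.ext; simp; omega
            rw [this, hlams]
          · by_cases h2 : (l : ℕ) % 2 = 0 ∧ (k : ℕ) = (l : ℕ) + 1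
            · rw [dif_neg h1, dif_pos h2, dif_neg (by omega),
                dif_pos (by omega : (j:ℕ) % 2 = 0 ∧ (i:ℕ) = (j:ℕ) + 1)]
              have : (⟨(j:ℕ)/2, by have := i.isLt; have := j.isLt; omega⟩ : Fin ((n+2)/2))
                  = ⟨(l:ℕ)/2 + 1, by have := l.isLt; omega⟩ := by
                apply Fin.ext; simp; omega
              rw [this, hlams]
            · rw [dif_neg h1, dif_neg h2, dif_neg (by omega), dif_neg (by omega)]

end SkewBlock

open Matrix
/-- Spectral (block-diagonalization) theorem for real skew-symmetric
matrices: `QᵀAQ` is block diagonal with `2×2` antisymmetric rotation blocks with rates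
`λᵢ`, `i = 0, …, ⌊d/2⌋ - 1`, and (for odd `d`) a final zero row and column. -/
theorem skewSymmetric_block_diagonalization
    (d : ℕ) (A : Matrix (Fin d) (Fin d) ℝ) (hA : Aᵀ = -A) :
    ∃ (Q : Matrix (Fin d) (Fin d) ℝ) (lam : Fin (d / 2) → ℝ),
      Qᵀ * Q = 1 ∧
      Qᵀ * A * Q = Matrix.of (fun i j : Fin d =>
        if h : (i : ℕ) % 2 = 0 ∧ (j : ℕ) = (i : ℕ) + 1 then
          lam ⟨(i : ℕ) / 2, by have hi := i.isLt; have hj := j.isLt; omega⟩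
        else if h' : (j : ℕ) % 2 = 0 ∧ (i : ℕ) = (j : ℕ) + 1 then
          -lam ⟨(j : ℕ) / 2, by have hi := i.isLt; have hj := j.isLt; omega⟩
        else 0) := by
  obtain ⟨Q, lam, h1, h2⟩ := skew_aux d A hA
  exact ⟨Q, lam, h1, h2⟩
end

section
/- Generalized Kelvin circulation theorem in a rotating frame in ℝ^d: let A be a real skew-symmetric d × d matrix, let u : ℝ × ℝ^d → ℝ^d be a continuously differentiable time-dependent velocity field and p : ℝ × ℝ^d → ℝ a continuously differentiable pressure satisfying the Euler equation with Coriolis force ∂_t u(t,x) + (u(t,x)·∇) u(t,x) + 2 A u(t,x) = −∇p(t,x) for all (t,x). Let Φ : ℝ × ℝ^d → ℝ^d be a twice continuously differentiable flow map with Φ(0,x) = x and ∂_t Φ(t,x) = u(t, Φ(t,x)) for all (t,x), and let γ : ℝ → ℝ^d be a continuously differentiable loop with γ(s+1) = γ(s). Then the absolute circulation t ↦ ∫₀¹ ⟨ u(t, Φ(t, γ(s))) + A Φ(t, γ(s)), ∂_s [Φ(t, γ(s))] ⟩ ds is constant in t. -/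
open Matrix

section aux

variable {d : ℕ}

/-- Euclidean dot product on `Fin d → ℝ`. -/
def dotp (v w : Fin d → ℝ) : ℝ := ∑ i, v i * w i

lemma dotp_comm (v w : Fin d → ℝ) : dotp v w = dotp w v := by
  simp [dotp, mul_comm]

lemma dotp_add_left (v w z : Fin d → ℝ) : dotp (v + w) z = dotp v z + dotp w z := by
  simp [dotp, add_mul, Finset.sum_add_distrib]

lemma hasDerivAt_dotp {f g : ℝ → Fin d → ℝ} {f' g' : Fin d → ℝ} {x : ℝ}
    (hf : HasDerivAt f f' x) (hg : HasDerivAt g g' x) :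
    HasDerivAt (fun y => dotp (f y) (g y)) (dotp f' (g x) + dotp (f x) g') x := by
  have : HasDerivAt (fun y => ∑ i, f y i * g y i)
      (∑ i, (f' i * g x i + f x i * g' i)) x := by
    apply HasDerivAt.fun_sum
    intro i _
    exact ((hasDerivAt_pi.1 hf i).mul (hasDerivAt_pi.1 hg i))
  simpa [dotp, Finset.sum_add_distrib] using this

lemma hasDerivAt_mulVec (A : Matrix (Fin d) (Fin d) ℝ) {f : ℝ → Fin d → ℝ}
    {f' : Fin d → ℝ} {x : ℝ} (hf : HasDerivAt f f' x) :
    HasDerivAt (fun y => A.mulVec (f y)) (A.mulVec f') x := by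
  rw [hasDerivAt_pi]
  intro i
  have : HasDerivAt (fun y => ∑ j, A i j * f y j) (∑ j, A i j * f' j) x := by
    apply HasDerivAt.fun_sum
    intro j _
    exact (hasDerivAt_pi.1 hf j).const_mul (A i j)
  simpa [Matrix.mulVec, dotProduct] using this

lemma continuous_mulVec (A : Matrix (Fin d) (Fin d) ℝ) :
    Continuous fun v : Fin d → ℝ => A.mulVec v := by
  apply continuous_pi
  intro i
  simp only [Matrix.mulVec, dotProduct]
  exact continuous_finset_sum _ fun j _ => continuous_const.mul (continuous_apply j)

lemma continuous_dotp :
    Continuous fun vw : (Fin d → ℝ) × (Fin d → ℝ) => dotp vw.1 vw.2 := by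
  apply continuous_finset_sum
  intro i _
  exact ((continuous_apply i).comp continuous_fst).mul ((continuous_apply i).comp continuous_snd)

lemma dotp_mulVec_skew {A : Matrix (Fin d) (Fin d) ℝ} (hA : Aᵀ = -A)
    (v w : Fin d → ℝ) : dotp (A.mulVec v) w = -dotp (A.mulVec w) v := by
  have hAs : ∀ i j, A j i = -A i j := by
    intro i j
    have := congrFun (congrFun hA i) j
    simpa [Matrix.transpose_apply, Matrix.neg_apply] using this
  simp only [dotp, Matrix.mulVec, dotProduct, Finset.sum_mul]
  rw [Finset.sum_comm, ← Finset.sum_neg_distrib]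
  apply Finset.sum_congr rfl
  intro a _
  rw [← Finset.sum_neg_distrib]
  apply Finset.sum_congr rfl
  intro b _
  rw [hAs a b]
  ring

lemma sum_smul_single (v : Fin d → ℝ) :
    ∑ j, v j • (Pi.single j (1 : ℝ) : Fin d → ℝ) = v := by
  ext k
  simp [Finset.sum_apply, Pi.single_apply]

end aux

/-- Generalized Kelvin circulation theorem in a rotating frame in `ℝ^d`:
for a solution `(u, p)` of the Euler equation with Coriolis force `2 A u` (where `A` is
skew-symmetric), the circulation of the absolute velocity `u + A x` around any material
loop transported by the flow map `Φ` is constant in time. -/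
theorem kelvin_circulation_rotating_frame
    (d : ℕ) (A : Matrix (Fin d) (Fin d) ℝ) (hA : Aᵀ = -A)
    (u : ℝ × (Fin d → ℝ) → (Fin d → ℝ)) (hu : ContDiff ℝ 1 u)
    (p : ℝ × (Fin d → ℝ) → ℝ) (hp : ContDiff ℝ 1 p)
    (heuler : ∀ (t : ℝ) (x : Fin d → ℝ) (i : Fin d),
      deriv (fun s => u (s, x) i) t +
        (∑ j, u (t, x) j * fderiv ℝ (fun y => u (t, y) i) x (Pi.single j 1)) +
        2 * A.mulVec (u (t, x)) i =
      -(fderiv ℝ (fun y => p (t, y)) x (Pi.single i 1)))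
    (Φ : ℝ × (Fin d → ℝ) → (Fin d → ℝ)) (hΦ : ContDiff ℝ 2 Φ)
    (hΦ0 : ∀ x, Φ (0, x) = x)
    (hflow : ∀ (t : ℝ) (x : Fin d → ℝ), deriv (fun s => Φ (s, x)) t = u (t, Φ (t, x)))
    (γ : ℝ → Fin d → ℝ) (hγ : ContDiff ℝ 1 γ) (hper : ∀ s, γ (s + 1) = γ s)
    (t₁ t₂ : ℝ) :
    (∫ s in (0:ℝ)..1, ∑ i,
        (u (t₁, Φ (t₁, γ s)) i + A.mulVec (Φ (t₁, γ s)) i) *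
          deriv (fun s' => Φ (t₁, γ s')) s i) =
    (∫ s in (0:ℝ)..1, ∑ i,
        (u (t₂, Φ (t₂, γ s)) i + A.mulVec (Φ (t₂, γ s)) i) *
          deriv (fun s' => Φ (t₂, γ s')) s i) := by
  classical
  -- Notation for the various derivatives
  set DΦ := fderiv ℝ Φ with hDΦdef
  set Du := fderiv ℝ u with hDudef
  set Dp := fderiv ℝ p with hDpdef
  set γ' : ℝ → (Fin d → ℝ) := deriv γ with hγ'def
  -- basic differentiability facts
  have hΦdiff : ∀ z, HasFDerivAt Φ (DΦ z) z := fun z =>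
    (hΦ.differentiable (by norm_num) z).hasFDerivAt
  have hDΦc1 : ContDiff ℝ 1 DΦ := hΦ.fderiv_right (le_refl 2)
  have hDΦdiff : ∀ z, HasFDerivAt DΦ (fderiv ℝ DΦ z) z := fun z =>
    (hDΦc1.differentiable (by norm_num) z).hasFDerivAt
  have schwarz : ∀ z a b, fderiv ℝ DΦ z a b = fderiv ℝ DΦ z b a := fun z a b =>
    second_derivative_symmetric hΦdiff (hDΦdiff z) a b
  have hudiff : ∀ z, HasFDerivAt u (Du z) z := fun z =>
    (hu.differentiable (by norm_num) z).hasFDerivAt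
  have hpdiff : ∀ z, HasFDerivAt p (Dp z) z := fun z =>
    (hp.differentiable (by norm_num) z).hasFDerivAt
  have hγdiff : ∀ s, HasDerivAt γ (γ' s) s := fun s =>
    (hγ.differentiable (by norm_num) s).hasDerivAt
  -- the loop curve in product space
  have hcurve : ∀ t s, HasDerivAt (fun s' => ((t, γ s') : ℝ × (Fin d → ℝ))) ((0 : ℝ), γ' s) s :=
    fun t s => (hasDerivAt_const s t).prodMk (hγdiff s)
  -- spatial tangent vector of the transported loop
  have hq : ∀ t s, HasDerivAt (fun s' => Φ (t, γ s')) (DΦ (t, γ s) (0, γ' s)) s :=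
    fun t s => (hΦdiff (t, γ s)).comp_hasDerivAt s (hcurve t s)
  -- DΦ in the time direction is u
  have hDΦ10 : ∀ t x, DΦ (t, x) ((1 : ℝ), (0 : Fin d → ℝ)) = u (t, Φ (t, x)) := by
    intro t x
    have h1 : HasDerivAt (fun τ => Φ (τ, x)) (DΦ (t, x) (1, 0)) t :=
      (hΦdiff (t, x)).comp_hasDerivAt t ((hasDerivAt_id t).prodMk (hasDerivAt_const t x))
    rw [← h1.deriv, hflow]
  -- time derivative of the transported loop point
  have hct : ∀ t s, HasDerivAt (fun t' => Φ (t', γ s)) (u (t, Φ (t, γ s))) t := by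
    intro t s
    have h1 : HasDerivAt (fun t' => Φ (t', γ s)) (DΦ (t, γ s) (1, 0)) t :=
      (hΦdiff (t, γ s)).comp_hasDerivAt t ((hasDerivAt_id t).prodMk (hasDerivAt_const t (γ s)))
    rwa [hDΦ10] at h1
  -- s-derivative of the velocity along the loop
  have hus : ∀ t s, HasDerivAt (fun s' => u (t, Φ (t, γ s')))
      (Du (t, Φ (t, γ s)) (0, DΦ (t, γ s) (0, γ' s))) s := fun t s =>
    (hudiff (t, Φ (t, γ s))).comp_hasDerivAt s ((hasDerivAt_const s t).prodMk (hq t s))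
  have hps : ∀ t s, HasDerivAt (fun s' => p (t, Φ (t, γ s')))
      (Dp (t, Φ (t, γ s)) (0, DΦ (t, γ s) (0, γ' s))) s := fun t s =>
    (hpdiff (t, Φ (t, γ s))).comp_hasDerivAt s ((hasDerivAt_const s t).prodMk (hq t s))
  -- equality of mixed partials
  have hmix : ∀ t s, fderiv ℝ DΦ (t, γ s) ((0 : ℝ), γ' s) ((1 : ℝ), (0 : Fin d → ℝ)) =
      Du (t, Φ (t, γ s)) (0, DΦ (t, γ s) (0, γ' s)) := by
    intro t s
    have h0 : HasDerivAt (fun s' => DΦ (t, γ s')) (fderiv ℝ DΦ (t, γ s) (0, γ' s)) s :=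
      (hDΦdiff (t, γ s)).comp_hasDerivAt s (hcurve t s)
    have h1 : HasDerivAt (fun s' => DΦ (t, γ s') ((1 : ℝ), (0 : Fin d → ℝ)))
        (fderiv ℝ DΦ (t, γ s) (0, γ' s) ((1 : ℝ), (0 : Fin d → ℝ))) s := by
      simpa using h0.clm_apply (hasDerivAt_const s ((1 : ℝ), (0 : Fin d → ℝ)))
    have heq : (fun s' => DΦ (t, γ s') ((1 : ℝ), (0 : Fin d → ℝ))) =
        fun s' => u (t, Φ (t, γ s')) := funext fun s' => hDΦ10 t (γ s')
    exact HasDerivAt.unique (heq ▸ h1) (hus t s)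
  -- time derivative of the spatial tangent vector
  have hqt : ∀ t s, HasDerivAt (fun t' => DΦ (t', γ s) (0, γ' s))
      (Du (t, Φ (t, γ s)) (0, DΦ (t, γ s) (0, γ' s))) t := by
    intro t s
    have h1 : HasDerivAt (fun t' => DΦ (t', γ s)) (fderiv ℝ DΦ (t, γ s) (1, 0)) t :=
      (hDΦdiff (t, γ s)).comp_hasDerivAt t ((hasDerivAt_id t).prodMk (hasDerivAt_const t (γ s)))
    have h2 : HasDerivAt (fun t' => DΦ (t', γ s) ((0 : ℝ), γ' s))
        (fderiv ℝ DΦ (t, γ s) ((1 : ℝ), (0 : Fin d → ℝ)) ((0 : ℝ), γ' s)) t := by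
      simpa using h1.clm_apply (hasDerivAt_const t ((0 : ℝ), γ' s))
    rwa [schwarz, hmix] at h2
  -- component identities relating the statement's partial derivatives to full derivatives
  have hDu10 : ∀ (t : ℝ) (x : Fin d → ℝ) (i : Fin d),
      deriv (fun τ => u (τ, x) i) t = Du (t, x) ((1 : ℝ), (0 : Fin d → ℝ)) i := by
    intro t x i
    have h1 : HasDerivAt (fun τ => u (τ, x)) (Du (t, x) (1, 0)) t :=
      (hudiff (t, x)).comp_hasDerivAt t ((hasDerivAt_id t).prodMk (hasDerivAt_const t x))
    exact (hasDerivAt_pi.1 h1 i).deriv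
  have hyins : ∀ (t : ℝ) (x : Fin d → ℝ), HasFDerivAt (fun y => ((t, y) : ℝ × (Fin d → ℝ)))
      (((0 : (Fin d → ℝ) →L[ℝ] ℝ)).prod (ContinuousLinearMap.id ℝ (Fin d → ℝ))) x :=
    fun t x => (hasFDerivAt_const t x).prodMk (hasFDerivAt_id x)
  have hDu0v : ∀ (t : ℝ) (x v : Fin d → ℝ) (i : Fin d),
      fderiv ℝ (fun y => u (t, y) i) x v = Du (t, x) ((0 : ℝ), v) i := by
    intro t x v i
    have h2 : HasFDerivAt (fun y => u (t, y))
        ((Du (t, x)).comp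
          (((0 : (Fin d → ℝ) →L[ℝ] ℝ)).prod (ContinuousLinearMap.id ℝ (Fin d → ℝ)))) x :=
      (hudiff (t, x)).comp x (hyins t x)
    have h3 : HasFDerivAt (fun y => u (t, y) i)
        ((ContinuousLinearMap.proj (R := ℝ) (φ := fun _ : Fin d => ℝ) i).comp
          ((Du (t, x)).comp
            (((0 : (Fin d → ℝ) →L[ℝ] ℝ)).prod (ContinuousLinearMap.id ℝ (Fin d → ℝ))))) x :=
      (ContinuousLinearMap.proj (R := ℝ) (φ := fun _ : Fin d => ℝ) i).hasFDerivAt.comp x h2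
    rw [h3.fderiv]
    simp
  have hDp0v : ∀ (t : ℝ) (x v : Fin d → ℝ),
      fderiv ℝ (fun y => p (t, y)) x v = Dp (t, x) ((0 : ℝ), v) := by
    intro t x v
    have h2 : HasFDerivAt (fun y => p (t, y))
        ((Dp (t, x)).comp
          (((0 : (Fin d → ℝ) →L[ℝ] ℝ)).prod (ContinuousLinearMap.id ℝ (Fin d → ℝ)))) x :=
      (hpdiff (t, x)).comp x (hyins t x)
    rw [h2.fderiv]
    simp
  -- decomposition of Du (1, u)
  have hdecomp : ∀ (t : ℝ) (x : Fin d → ℝ) (i : Fin d),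
      Du (t, x) ((1 : ℝ), u (t, x)) i =
        Du (t, x) ((1 : ℝ), (0 : Fin d → ℝ)) i +
          ∑ j, u (t, x) j * Du (t, x) ((0 : ℝ), Pi.single j 1) i := by
    intro t x i
    have e1 : ((1 : ℝ), u (t, x)) = ((1 : ℝ), (0 : Fin d → ℝ)) +
        ∑ j, u (t, x) j • (((0 : ℝ), Pi.single j 1) : ℝ × (Fin d → ℝ)) := by
      rw [Prod.ext_iff]
      constructor
      · simp [Prod.fst_sum]
      · simp [Prod.snd_sum, sum_smul_single]
    rw [e1, map_add, map_sum]
    simp only [ContinuousLinearMap.map_smul]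
    simp [Finset.sum_apply]
  -- the Euler equation in terms of full derivatives
  have keyK : ∀ (t : ℝ) (x : Fin d → ℝ) (i : Fin d),
      Du (t, x) ((1 : ℝ), u (t, x)) i + 2 * A.mulVec (u (t, x)) i +
        Dp (t, x) ((0 : ℝ), Pi.single i 1) = 0 := by
    intro t x i
    have h := heuler t x i
    rw [hDu10 t x i, hDp0v t x] at h
    simp only [hDu0v t x] at h
    rw [hdecomp t x i]
    linarith
  -- time derivative of the velocity along the moving point
  have hut : ∀ t s, HasDerivAt (fun t' => u (t', Φ (t', γ s)))
      (Du (t, Φ (t, γ s)) (1, u (t, Φ (t, γ s)))) t := fun t s =>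
    (hudiff (t, Φ (t, γ s))).comp_hasDerivAt t ((hasDerivAt_id t).prodMk (hct t s))
  -- the integrand, its time derivative, and the potential for the s-derivative
  set hfun : ℝ → ℝ → ℝ := fun t s =>
    dotp (u (t, Φ (t, γ s)) + A.mulVec (Φ (t, γ s))) (DΦ (t, γ s) (0, γ' s)) with hfundef
  set htfun : ℝ → ℝ → ℝ := fun t s =>
    dotp (Du (t, Φ (t, γ s)) (1, u (t, Φ (t, γ s))) + A.mulVec (u (t, Φ (t, γ s))))
        (DΦ (t, γ s) (0, γ' s)) +
      dotp (u (t, Φ (t, γ s)) + A.mulVec (Φ (t, γ s)))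
        (Du (t, Φ (t, γ s)) (0, DΦ (t, γ s) (0, γ' s))) with htfundef
  set gfun : ℝ → ℝ → ℝ := fun t s =>
    -p (t, Φ (t, γ s)) + dotp (u (t, Φ (t, γ s))) (u (t, Φ (t, γ s))) / 2 +
      dotp (A.mulVec (Φ (t, γ s))) (u (t, Φ (t, γ s))) with gfundef
  -- time derivative of the integrand
  have Hht : ∀ t s, HasDerivAt (fun t' => hfun t' s) (htfun t s) t := by
    intro t s
    have H := hasDerivAt_dotp ((hut t s).fun_add (hasDerivAt_mulVec A (hct t s))) (hqt t s)
    simpa only [hfundef, htfundef] using H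
  -- s-derivative of the potential equals the time derivative of the integrand
  have Hgs : ∀ t s, HasDerivAt (fun s' => gfun t s') (htfun t s) s := by
    intro t s
    have H := ((hps t s).fun_neg.fun_add
        ((hasDerivAt_dotp (hus t s) (hus t s)).div_const 2)).fun_add
      (hasDerivAt_dotp (hasDerivAt_mulVec A (hq t s)) (hus t s))
    have hsum : dotp (Du (t, Φ (t, γ s)) (1, u (t, Φ (t, γ s)))) (DΦ (t, γ s) (0, γ' s)) +
        2 * dotp (A.mulVec (u (t, Φ (t, γ s)))) (DΦ (t, γ s) (0, γ' s)) +
        Dp (t, Φ (t, γ s)) ((0 : ℝ), DΦ (t, γ s) (0, γ' s)) = 0 := by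
      have e2 : (((0 : ℝ), DΦ (t, γ s) (0, γ' s)) : ℝ × (Fin d → ℝ)) =
          ∑ i, DΦ (t, γ s) (0, γ' s) i •
            (((0 : ℝ), Pi.single i 1) : ℝ × (Fin d → ℝ)) := by
        rw [Prod.ext_iff]
        constructor
        · simp [Prod.fst_sum]
        · simp [Prod.snd_sum, sum_smul_single]
      rw [e2, map_sum]
      simp only [ContinuousLinearMap.map_smul, smul_eq_mul]
      simp only [dotp]
      rw [Finset.mul_sum, ← Finset.sum_add_distrib, ← Finset.sum_add_distrib]
      apply Finset.sum_eq_zero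
      intro i _
      have hK := keyK t (Φ (t, γ s)) i
      linear_combination (DΦ (t, γ s) (0, γ' s) i) * hK
    have e3 : dotp (A.mulVec (DΦ (t, γ s) (0, γ' s))) (u (t, Φ (t, γ s))) =
        -dotp (A.mulVec (u (t, Φ (t, γ s)))) (DΦ (t, γ s) (0, γ' s)) :=
      dotp_mulVec_skew hA _ _
    have e4 : dotp (Du (t, Φ (t, γ s)) (0, DΦ (t, γ s) (0, γ' s))) (u (t, Φ (t, γ s))) =
        dotp (u (t, Φ (t, γ s))) (Du (t, Φ (t, γ s)) (0, DΦ (t, γ s) (0, γ' s))) :=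
      dotp_comm _ _
    have hval : -Dp (t, Φ (t, γ s)) ((0 : ℝ), DΦ (t, γ s) (0, γ' s)) +
        (dotp (Du (t, Φ (t, γ s)) (0, DΦ (t, γ s) (0, γ' s))) (u (t, Φ (t, γ s))) +
          dotp (u (t, Φ (t, γ s))) (Du (t, Φ (t, γ s)) (0, DΦ (t, γ s) (0, γ' s)))) / 2 +
        (dotp (A.mulVec (DΦ (t, γ s) (0, γ' s))) (u (t, Φ (t, γ s))) +
          dotp (A.mulVec (Φ (t, γ s))) (Du (t, Φ (t, γ s)) (0, DΦ (t, γ s) (0, γ' s)))) =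
        htfun t s := by
      rw [htfundef]
      simp only [dotp_add_left, e3, e4]
      linarith [hsum]
    rw [gfundef]
    simpa only [← hval] using H
  -- continuity of all objects
  have hcont_c : Continuous (fun z : ℝ × ℝ => Φ (z.1, γ z.2)) :=
    hΦ.continuous.comp (continuous_fst.prodMk (hγ.continuous.comp continuous_snd))
  have hcont_tc : Continuous (fun z : ℝ × ℝ => ((z.1, Φ (z.1, γ z.2)) : ℝ × (Fin d → ℝ))) :=
    continuous_fst.prodMk hcont_c
  have hcont_u : Continuous (fun z : ℝ × ℝ => u (z.1, Φ (z.1, γ z.2))) :=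
    hu.continuous.comp hcont_tc
  have hcont_γ' : Continuous γ' := hγ.continuous_deriv le_rfl
  have hcont_DΦ : Continuous DΦ := hΦ.continuous_fderiv (by norm_num)
  have hcont_q : Continuous (fun z : ℝ × ℝ => DΦ (z.1, γ z.2) (0, γ' z.2)) :=
    (hcont_DΦ.comp (continuous_fst.prodMk (hγ.continuous.comp continuous_snd))).clm_apply
      (continuous_const.prodMk (hcont_γ'.comp continuous_snd))
  have hcont_Du : Continuous Du := hu.continuous_fderiv (by norm_num)
  have hcont_Duz : Continuous (fun z : ℝ × ℝ => Du (z.1, Φ (z.1, γ z.2))) :=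
    hcont_Du.comp hcont_tc
  have hcont_Du1u : Continuous
      (fun z : ℝ × ℝ => Du (z.1, Φ (z.1, γ z.2)) (1, u (z.1, Φ (z.1, γ z.2)))) :=
    hcont_Duz.clm_apply (continuous_const.prodMk hcont_u)
  have hcont_Au : Continuous (fun z : ℝ × ℝ => A.mulVec (u (z.1, Φ (z.1, γ z.2)))) :=
    (continuous_mulVec A).comp hcont_u
  have hcont_Ac : Continuous (fun z : ℝ × ℝ => A.mulVec (Φ (z.1, γ z.2))) :=
    (continuous_mulVec A).comp hcont_c
  have hcont_Du0q : Continuous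
      (fun z : ℝ × ℝ => Du (z.1, Φ (z.1, γ z.2)) (0, DΦ (z.1, γ z.2) (0, γ' z.2))) :=
    hcont_Duz.clm_apply (continuous_const.prodMk hcont_q)
  have hcont_h : Continuous (fun z : ℝ × ℝ => hfun z.1 z.2) := by
    rw [hfundef]
    exact continuous_dotp.comp ((hcont_u.add hcont_Ac).prodMk hcont_q)
  have hcont_ht : Continuous (fun z : ℝ × ℝ => htfun z.1 z.2) := by
    rw [htfundef]
    exact (continuous_dotp.comp ((hcont_Du1u.add hcont_Au).prodMk hcont_q)).add
      (continuous_dotp.comp ((hcont_u.add hcont_Ac).prodMk hcont_Du0q))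
  -- the circulation function
  set F : ℝ → ℝ := fun t => ∫ s in (0:ℝ)..1, hfun t s with hFdef
  have HF : ∀ t₀ : ℝ, HasDerivAt F 0 t₀ := by
    intro t₀
    obtain ⟨C, hC⟩ :=
      (isCompact_Icc.prod isCompact_Icc :
        IsCompact (Set.Icc (t₀ - 1) (t₀ + 1) ×ˢ Set.Icc (0 : ℝ) 1)).exists_bound_of_continuousOn
        hcont_ht.continuousOn
    have hbound : ∀ s : ℝ, s ∈ Set.uIoc (0 : ℝ) 1 →
        ∀ x ∈ Metric.ball t₀ 1, ‖htfun x s‖ ≤ C := by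
      intro s hs x hx
      have hx' : x ∈ Set.Icc (t₀ - 1) (t₀ + 1) := by
        rw [Real.ball_eq_Ioo] at hx
        exact Set.Ioo_subset_Icc_self hx
      have hs' : s ∈ Set.Icc (0 : ℝ) 1 := by
        rw [Set.uIoc_of_le zero_le_one] at hs
        exact Set.Ioc_subset_Icc_self hs
      exact hC (x, s) (Set.mk_mem_prod hx' hs')
    have key := intervalIntegral.hasDerivAt_integral_of_dominated_loc_of_deriv_le
      (F := fun t s => hfun t s) (F' := fun t s => htfun t s) (bound := fun _ => C)
      (a := 0) (b := 1) (μ := MeasureTheory.volume) (x₀ := t₀) (Metric.ball_mem_nhds t₀ one_pos)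
      (Filter.Eventually.of_forall fun t =>
        (hcont_h.comp (Continuous.prodMk_right t)).aestronglyMeasurable)
      ((hcont_h.comp (Continuous.prodMk_right t₀)).intervalIntegrable 0 1)
      ((hcont_ht.comp (Continuous.prodMk_right t₀)).aestronglyMeasurable)
      (Filter.Eventually.of_forall hbound)
      intervalIntegrable_const
      (Filter.Eventually.of_forall fun s _ x _ => Hht x s)
    have hzero : (∫ s in (0:ℝ)..1, htfun t₀ s) = 0 := by
      rw [intervalIntegral.integral_eq_sub_of_hasDerivAt (fun s _ => Hgs t₀ s)
        ((hcont_ht.comp (Continuous.prodMk_right t₀)).intervalIntegrable 0 1)]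
      have hγ10 : γ 1 = γ 0 := by simpa using hper 0
      rw [gfundef]
      simp [hγ10]
    have := key.2
    rwa [hzero] at this
  have hconst : F t₁ = F t₂ :=
    is_const_of_deriv_eq_zero (fun t => (HF t).differentiableAt)
      (fun t => (HF t).deriv) t₁ t₂
  have hrepr : ∀ t : ℝ, (∫ s in (0:ℝ)..1, ∑ i,
      (u (t, Φ (t, γ s)) i + A.mulVec (Φ (t, γ s)) i) *
        deriv (fun s' => Φ (t, γ s')) s i) = F t := by
    intro t
    rw [hFdef]
    apply intervalIntegral.integral_congr
    intro s _
    beta_reduce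
    rw [(hq t s).deriv, hfundef]
    simp [dotp]
  rw [hrepr t₁, hrepr t₂, hconst]
end

section
/- Taylor–Proudman theorem in ℝ⁴ with simultaneously fast double rotation: let λ₁, λ₂ ∈ ℝ with λ₁ ≠ 0 and λ₂ ≠ 0, let u : ℝ⁴ → ℝ⁴ be continuously differentiable and Π : ℝ⁴ → ℝ twice continuously differentiable such that 2(−λ₁ u₂(x), λ₁ u₁(x), −λ₂ u₄(x), λ₂ u₃(x)) = −∇Π(x) for all x ∈ ℝ⁴. Then everywhere: u_{1,1} + u_{2,2} = 0, u_{3,3} + u_{4,4} = 0 (incompressibility within each rotating plane), and the cross-plane relations λ₁ u_{1,3} + λ₂ u_{4,2} = 0, λ₁ u_{2,3} − λ₂ u_{4,1} = 0, λ₁ u_{1,4} − λ₂ u_{3,2} = 0, λ₁ u_{2,4} + λ₂ u_{3,1} = 0. -/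
/-- The partial derivative `∂ᵢ f` of a scalar function on `ℝ^n` at `x`. -/
noncomputable def pd {n : ℕ} (i : Fin n) (f : (Fin n → ℝ) → ℝ) (x : Fin n → ℝ) : ℝ :=
  fderiv ℝ f x (Pi.single i 1)

lemma pd_const_mul {n : ℕ} (j : Fin n) (c : ℝ) (g : (Fin n → ℝ) → ℝ)
    (x : Fin n → ℝ) (hg : DifferentiableAt ℝ g x) :
    pd j (fun y => c * g y) x = c * pd j g x := by
  simp [pd, fderiv_const_mul hg c]

lemma pd_pd_eq {n : ℕ} (f : (Fin n → ℝ) → ℝ) (hf : ContDiff ℝ 2 f) (i j : Fin n)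
    (x : Fin n → ℝ) :
    pd i (pd j f) x = fderiv ℝ (fderiv ℝ f) x (Pi.single i 1) (Pi.single j 1) := by
  have hd : DifferentiableAt ℝ (fderiv ℝ f) x :=
    (hf.fderiv_right (m := 1) le_rfl).differentiable one_ne_zero x
  have h := ((ContinuousLinearMap.apply ℝ ℝ (Pi.single j 1)).hasFDerivAt).comp x
    hd.hasFDerivAt
  have h2 : pd j f = ⇑(ContinuousLinearMap.apply ℝ ℝ (Pi.single j 1)) ∘ fderiv ℝ f := rfl
  rw [pd, h2, h.fderiv]; rfl

lemma pd_symm {n : ℕ} (f : (Fin n → ℝ) → ℝ) (hf : ContDiff ℝ 2 f) (i j : Fin n)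
    (x : Fin n → ℝ) :
    pd i (pd j f) x = pd j (pd i f) x := by
  rw [pd_pd_eq f hf, pd_pd_eq f hf]
  exact (hf.contDiffAt.isSymmSndFDerivAt (by simp [minSmoothness_of_isRCLikeNormedField])) _ _

/-- Taylor–Proudman theorem in `ℝ⁴` with simultaneously fast double
rotation (rates `λ₁` in the `x₁`-`x₂` plane and `λ₂` in the `x₃`-`x₄` plane, both
nonzero): geostrophic balance implies incompressibility within each rotating plane and
the four cross-plane relations (0-indexed coordinates). -/
theorem taylor_proudman_R4_double_rotation
    (lam₁ lam₂ : ℝ) (h₁ : lam₁ ≠ 0) (h₂ : lam₂ ≠ 0)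
    (u : (Fin 4 → ℝ) → (Fin 4 → ℝ)) (hu : ContDiff ℝ 1 u)
    (Pr : (Fin 4 → ℝ) → ℝ) (hPr : ContDiff ℝ 2 Pr)
    (hbal : ∀ x : Fin 4 → ℝ,
      2 * (-lam₁ * u x 1) = -(pd 0 Pr x) ∧
      2 * (lam₁ * u x 0) = -(pd 1 Pr x) ∧
      2 * (-lam₂ * u x 3) = -(pd 2 Pr x) ∧
      2 * (lam₂ * u x 2) = -(pd 3 Pr x)) :
    ∀ x : Fin 4 → ℝ,
      pd 0 (fun y => u y 0) x + pd 1 (fun y => u y 1) x = 0 ∧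
      pd 2 (fun y => u y 2) x + pd 3 (fun y => u y 3) x = 0 ∧
      lam₁ * pd 2 (fun y => u y 0) x + lam₂ * pd 1 (fun y => u y 3) x = 0 ∧
      lam₁ * pd 2 (fun y => u y 1) x - lam₂ * pd 0 (fun y => u y 3) x = 0 ∧
      lam₁ * pd 3 (fun y => u y 0) x - lam₂ * pd 1 (fun y => u y 2) x = 0 ∧
      lam₁ * pd 3 (fun y => u y 1) x + lam₂ * pd 0 (fun y => u y 2) x = 0 := by
  have hdPr : ∀ j : Fin 4, ∀ y, DifferentiableAt ℝ (pd j Pr) y := by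
    intro j y
    have hd : DifferentiableAt ℝ (fderiv ℝ Pr) y :=
      (hPr.fderiv_right (m := 1) le_rfl).differentiable one_ne_zero y
    exact (ContinuousLinearMap.apply ℝ ℝ (Pi.single j 1)).differentiableAt.comp y hd
  have e0 : (fun y => u y 0) = fun y => (-(2 * lam₁)⁻¹) * pd 1 Pr y := by
    funext y; have := (hbal y).2.1; field_simp; linarith
  have e1 : (fun y => u y 1) = fun y => (2 * lam₁)⁻¹ * pd 0 Pr y := by
    funext y; have := (hbal y).1; field_simp; linarith
  have e2 : (fun y => u y 2) = fun y => (-(2 * lam₂)⁻¹) * pd 3 Pr y := by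
    funext y; have := (hbal y).2.2.2; field_simp; linarith
  have e3 : (fun y => u y 3) = fun y => (2 * lam₂)⁻¹ * pd 2 Pr y := by
    funext y; have := (hbal y).2.2.1; field_simp; linarith
  intro x
  rw [e0, e1, e2, e3]
  have P := fun i j => pd_const_mul (n := 4) i ((2 * lam₁)⁻¹) (pd j Pr) x (hdPr j x)
  have Q := fun i j => pd_const_mul (n := 4) i (-(2 * lam₁)⁻¹) (pd j Pr) x (hdPr j x)
  have R := fun i j => pd_const_mul (n := 4) i ((2 * lam₂)⁻¹) (pd j Pr) x (hdPr j x)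
  have S := fun i j => pd_const_mul (n := 4) i (-(2 * lam₂)⁻¹) (pd j Pr) x (hdPr j x)
  have sym := fun i j => pd_symm Pr hPr i j x
  refine ⟨?_, ?_, ?_, ?_, ?_, ?_⟩
  · rw [Q 0 1, P 1 0, sym 0 1]; ring
  · rw [S 2 3, R 3 2, sym 2 3]; ring
  · rw [Q 2 1, R 1 2, sym 2 1]; field_simp; ring
  · rw [P 2 0, R 0 2, sym 2 0]; field_simp; ring
  · rw [Q 3 1, S 1 3, sym 3 1]; field_simp; ring
  · rw [P 3 0, S 0 3, sym 3 0]; field_simp; ring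
end

section
/- Taylor–Proudman theorem in ℝ⁵ with simultaneously fast double rotation: let λ₁, λ₂ ∈ ℝ with λ₁ ≠ 0 and λ₂ ≠ 0, let u : ℝ⁵ → ℝ⁵ be continuously differentiable and Π : ℝ⁵ → ℝ twice continuously differentiable such that 2(−λ₁ u₂(x), λ₁ u₁(x), −λ₂ u₄(x), λ₂ u₃(x), 0) = −∇Π(x) for all x ∈ ℝ⁵. Then everywhere: u_{1,1} + u_{2,2} = 0, u_{3,3} + u_{4,4} = 0, λ₁ u_{1,3} + λ₂ u_{4,2} = 0, λ₁ u_{2,3} − λ₂ u_{4,1} = 0, λ₁ u_{1,4} − λ₂ u_{3,2} = 0, λ₁ u_{2,4} + λ₂ u_{3,1} = 0, and in addition the cylinder conditions along the rotation axis x₅: u_{1,5} = u_{2,5} = u_{3,5} = u_{4,5} = 0, while no constraint is imposed on u₅. -/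
/-- Taylor–Proudman theorem in `ℝ⁵` with simultaneously fast double
rotation (rates `λ₁` in the `x₁`-`x₂` plane, `λ₂` in the `x₃`-`x₄` plane, both nonzero;
rotation axis `x₅`): geostrophic balance implies planar incompressibilities, the
cross-plane relations, and the cylinder conditions along `x₅` (0-indexed coordinates). -/
theorem taylor_proudman_R5_double_rotation
    (lam₁ lam₂ : ℝ) (h₁ : lam₁ ≠ 0) (h₂ : lam₂ ≠ 0)
    (u : (Fin 5 → ℝ) → (Fin 5 → ℝ)) (hu : ContDiff ℝ 1 u)
    (Pr : (Fin 5 → ℝ) → ℝ) (hPr : ContDiff ℝ 2 Pr)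
    (hbal : ∀ x : Fin 5 → ℝ,
      2 * (-lam₁ * u x 1) = -(pd 0 Pr x) ∧
      2 * (lam₁ * u x 0) = -(pd 1 Pr x) ∧
      2 * (-lam₂ * u x 3) = -(pd 2 Pr x) ∧
      2 * (lam₂ * u x 2) = -(pd 3 Pr x) ∧
      (0 : ℝ) = -(pd 4 Pr x)) :
    ∀ x : Fin 5 → ℝ,
      pd 0 (fun y => u y 0) x + pd 1 (fun y => u y 1) x = 0 ∧
      pd 2 (fun y => u y 2) x + pd 3 (fun y => u y 3) x = 0 ∧
      lam₁ * pd 2 (fun y => u y 0) x + lam₂ * pd 1 (fun y => u y 3) x = 0 ∧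
      lam₁ * pd 2 (fun y => u y 1) x - lam₂ * pd 0 (fun y => u y 3) x = 0 ∧
      lam₁ * pd 3 (fun y => u y 0) x - lam₂ * pd 1 (fun y => u y 2) x = 0 ∧
      lam₁ * pd 3 (fun y => u y 1) x + lam₂ * pd 0 (fun y => u y 2) x = 0 ∧
      pd 4 (fun y => u y 0) x = 0 ∧
      pd 4 (fun y => u y 1) x = 0 ∧
      pd 4 (fun y => u y 2) x = 0 ∧
      pd 4 (fun y => u y 3) x = 0 := by
  intro x
  have hPr' : ContDiff ℝ 1 (fderiv ℝ Pr) := hPr.fderiv_right (by norm_num)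
  have hgd : ∀ i : Fin 5, Differentiable ℝ (fun y => pd i Pr y) := by
    intro i
    exact (hPr'.clm_apply contDiff_const).differentiable one_ne_zero
  -- second partials
  have key : ∀ i j : Fin 5,
      pd j (fun y => pd i Pr y) x = fderiv ℝ (fderiv ℝ Pr) x (Pi.single j 1) (Pi.single i 1) := by
    intro i j
    unfold pd
    rw [fderiv_clm_apply (hPr'.differentiable one_ne_zero x) (differentiableAt_const _)]
    simp
  have hsymm : ∀ i j : Fin 5,
      pd j (fun y => pd i Pr y) x = pd i (fun y => pd j Pr y) x := by
    intro i j
    rw [key, key]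
    exact second_derivative_symmetric (fun y => (hPr.differentiable (by norm_num) y).hasFDerivAt)
      ((hPr'.differentiable one_ne_zero x).hasFDerivAt) _ _
  -- derivative of scaled pressure gradient components
  have pdmul : ∀ (i j : Fin 5) (c : ℝ),
      pd j (fun y => c * pd i Pr y) x = c * pd j (fun y => pd i Pr y) x := by
    intro i j c
    unfold pd
    have hd : DifferentiableAt ℝ (fun y => (fderiv ℝ Pr y) (Pi.single i (1:ℝ))) x :=
      (((hPr'.clm_apply contDiff_const).differentiable one_ne_zero) x)
    rw [fderiv_const_mul hd c]
    simp
  -- express velocity components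
  have hu1 : (fun y => u y 1) = fun y => (1 / (2 * lam₁)) * pd 0 Pr y := by
    funext y; have h := (hbal y).1; field_simp; linarith
  have hu0 : (fun y => u y 0) = fun y => (-(1 / (2 * lam₁))) * pd 1 Pr y := by
    funext y; have h := (hbal y).2.1; field_simp; linarith
  have hu3 : (fun y => u y 3) = fun y => (1 / (2 * lam₂)) * pd 2 Pr y := by
    funext y; have h := (hbal y).2.2.1; field_simp; linarith
  have hu2 : (fun y => u y 2) = fun y => (-(1 / (2 * lam₂))) * pd 3 Pr y := by
    funext y; have h := (hbal y).2.2.2.1; field_simp; linarith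
  have hg4 : (fun y => pd 4 Pr y) = fun _ => (0 : ℝ) := by
    funext y; have h := (hbal y).2.2.2.2; linarith
  have hD4 : ∀ i : Fin 5, pd i (fun y => pd 4 Pr y) x = 0 := by
    intro i
    rw [hg4]
    unfold pd
    simp
  rw [hu0, hu1, hu2, hu3]
  simp only [pdmul]
  refine ⟨?_, ?_, ?_, ?_, ?_, ?_, ?_, ?_, ?_, ?_⟩
  · rw [hsymm 1 0]; ring
  · rw [hsymm 3 2]; ring
  · rw [hsymm 1 2]; field_simp; ring
  · rw [hsymm 0 2]; field_simp; ring
  · rw [hsymm 1 3]; field_simp; ring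
  · rw [hsymm 0 3]; field_simp; ring
  · rw [hsymm 1 4, hD4]; ring
  · rw [hsymm 0 4, hD4]; ring
  · rw [hsymm 3 4, hD4]; ring
  · rw [hsymm 2 4, hD4]; ring
end

section
/- Existence of the natural vortical (geostrophic) mode in ℝ⁴: for real numbers λ₁, λ₂ with λ₁ ≠ 0 and λ₂ ≠ 0 and any real wavevector (k₁, k₂, k₃, k₄), the nonzero complex vector (û₁, û₂, û₃, û₄, Π̂) = ( −i k₂/(2λ₁), i k₁/(2λ₁), −i k₄/(2λ₂), i k₃/(2λ₂), 1 ) lies in the kernel of the matrix M₀ obtained from the inertial-wave normal-mode matrix at frequency ϖ = 0, i.e., the 5 × 5 complex matrix with rows (0, −2λ₁, 0, 0, i k₁), (2λ₁, 0, 0, 0, i k₂), (0, 0, 0, −2λ₂, i k₃), (0, 0, 2λ₂, 0, i k₄), (k₁, k₂, k₃, k₄, 0). In particular M₀ is singular for every k, so ϖ = 0 is always a solution of the dispersion relation, with no condition on k. -/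
open Complex

/-- Existence of the natural vortical (geostrophic) mode in `ℝ⁴`: for
nonzero rotation rates `λ₁, λ₂` and any wavevector `k`, the explicit nonzero vector
`(û, Π̂) = (-ik₂/(2λ₁), ik₁/(2λ₁), -ik₄/(2λ₂), ik₃/(2λ₂), 1)` lies in the kernel of the
normal-mode matrix at frequency `ϖ = 0`; in particular that matrix is singular for every
`k`, so `ϖ = 0` always solves the dispersion relation. -/
theorem vortical_mode_exists_R4
    (lam₁ lam₂ : ℝ) (h₁ : lam₁ ≠ 0) (h₂ : lam₂ ≠ 0) (k₁ k₂ k₃ k₄ : ℝ) :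
    (!![(0 : ℂ), -2 * (lam₁ : ℂ), 0, 0, Complex.I * (k₁ : ℂ);
        2 * (lam₁ : ℂ), 0, 0, 0, Complex.I * (k₂ : ℂ);
        0, 0, 0, -2 * (lam₂ : ℂ), Complex.I * (k₃ : ℂ);
        0, 0, 2 * (lam₂ : ℂ), 0, Complex.I * (k₄ : ℂ);
        (k₁ : ℂ), (k₂ : ℂ), (k₃ : ℂ), (k₄ : ℂ), 0]).mulVec
      ![-(Complex.I * (k₂ : ℂ)) / (2 * (lam₁ : ℂ)),
        Complex.I * (k₁ : ℂ) / (2 * (lam₁ : ℂ)),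
        -(Complex.I * (k₄ : ℂ)) / (2 * (lam₂ : ℂ)),
        Complex.I * (k₃ : ℂ) / (2 * (lam₂ : ℂ)), 1] = 0 ∧
    (![-(Complex.I * (k₂ : ℂ)) / (2 * (lam₁ : ℂ)),
        Complex.I * (k₁ : ℂ) / (2 * (lam₁ : ℂ)),
        -(Complex.I * (k₄ : ℂ)) / (2 * (lam₂ : ℂ)),
        Complex.I * (k₃ : ℂ) / (2 * (lam₂ : ℂ)), 1] : Fin 5 → ℂ) ≠ 0 ∧
    (!![(0 : ℂ), -2 * (lam₁ : ℂ), 0, 0, Complex.I * (k₁ : ℂ);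
        2 * (lam₁ : ℂ), 0, 0, 0, Complex.I * (k₂ : ℂ);
        0, 0, 0, -2 * (lam₂ : ℂ), Complex.I * (k₃ : ℂ);
        0, 0, 2 * (lam₂ : ℂ), 0, Complex.I * (k₄ : ℂ);
        (k₁ : ℂ), (k₂ : ℂ), (k₃ : ℂ), (k₄ : ℂ), 0]).det = 0 := by
  have hl₁ : (lam₁ : ℂ) ≠ 0 := Complex.ofReal_ne_zero.mpr h₁
  have hl₂ : (lam₂ : ℂ) ≠ 0 := Complex.ofReal_ne_zero.mpr h₂
  have hker : (!![(0 : ℂ), -2 * (lam₁ : ℂ), 0, 0, Complex.I * (k₁ : ℂ);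
        2 * (lam₁ : ℂ), 0, 0, 0, Complex.I * (k₂ : ℂ);
        0, 0, 0, -2 * (lam₂ : ℂ), Complex.I * (k₃ : ℂ);
        0, 0, 2 * (lam₂ : ℂ), 0, Complex.I * (k₄ : ℂ);
        (k₁ : ℂ), (k₂ : ℂ), (k₃ : ℂ), (k₄ : ℂ), 0]).mulVec
      ![-(Complex.I * (k₂ : ℂ)) / (2 * (lam₁ : ℂ)),
        Complex.I * (k₁ : ℂ) / (2 * (lam₁ : ℂ)),
        -(Complex.I * (k₄ : ℂ)) / (2 * (lam₂ : ℂ)),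
        Complex.I * (k₃ : ℂ) / (2 * (lam₂ : ℂ)), 1] = 0 := by
    funext i
    fin_cases i <;>
      simp [Matrix.mulVec, dotProduct, Fin.sum_univ_five] <;>
      field_simp <;> ring
  have hne : (![-(Complex.I * (k₂ : ℂ)) / (2 * (lam₁ : ℂ)),
        Complex.I * (k₁ : ℂ) / (2 * (lam₁ : ℂ)),
        -(Complex.I * (k₄ : ℂ)) / (2 * (lam₂ : ℂ)),
        Complex.I * (k₃ : ℂ) / (2 * (lam₂ : ℂ)), 1] : Fin 5 → ℂ) ≠ 0 := by
    intro h
    have := congrFun h 4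
    simp at this
  exact ⟨hker, hne, Matrix.exists_mulVec_eq_zero_iff.mp ⟨_, hne, hker⟩⟩
end
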